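/- Let F be a field and let b_1, …, b_{kd} ∈ F with m ≤ kd/2. The (kd−m) × (m+1) matrix M with entries M_{ij} = b_{i+j−1} has rank at most m if and only if there exist an integer m' ≤ m, a polynomial h_1(T) ∈ F[T] of degree < m', and a monic polynomial h_2(T) ∈ F[T] of degree m', such that the formal Laurent series ∑_{r=1}^{kd} b_r T^{−r} − h_1(T)/h_2(T) has all terms of degree at most −kd−1+m−m' (i.e., equals O(T^{−kd−1+m−m'})). -/

import Mathlib

open HahnSeries Polynomial Finset

variable {F : Type} [Field F]

/-- coefficient of a finite sum of Hahn series -/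
lemma hs_sum_coeff {α : Type*} (s : Finset α) (f : α → LaurentSeries F) (e : ℤ) :
    (∑ a ∈ s, f a).coeff e = ∑ a ∈ s, (f a).coeff e := by
  classical
  induction s using Finset.induction_on with
  | empty => simp
  | insert _ _ h ih => simp [Finset.sum_insert h, HahnSeries.coeff_add, ih]

lemma aeval_y_eq (p : F[X]) :
    Polynomial.aeval (HahnSeries.single (-1 : ℤ) (1 : F)) p
      = ∑ i ∈ range (p.natDegree + 1), HahnSeries.single (-(i : ℤ)) (p.coeff i) := by
  rw [Polynomial.aeval_eq_sum_range]
  refine Finset.sum_congr rfl fun i _ => ?_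
  rw [Algebra.smul_def, HahnSeries.algebraMap_apply', PowerSeries.algebraMap_apply,
    HahnSeries.ofPowerSeries_C, HahnSeries.single_pow, HahnSeries.C_apply,
    HahnSeries.single_mul_single]
  simp

lemma aeval_y_coeff (p : F[X]) (e : ℤ) :
    (Polynomial.aeval (HahnSeries.single (-1 : ℤ) (1 : F)) p).coeff e
      = if 0 ≤ -e then p.coeff (-e).toNat else 0 := by
  rw [aeval_y_eq, hs_sum_coeff]
  by_cases he : 0 ≤ -e
  · simp only [he, if_true]
    have key : ∀ i ∈ range (p.natDegree + 1),
        (HahnSeries.single (-(i : ℤ)) (p.coeff i)).coeff e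
          = if i = (-e).toNat then p.coeff i else 0 := by
      intro i _
      rw [HahnSeries.coeff_single]
      congr 1
      simp only [eq_iff_iff]
      constructor
      · rintro rfl; omega
      · rintro rfl; omega
    rw [Finset.sum_congr rfl key, Finset.sum_ite_eq' (range (p.natDegree + 1))]
    by_cases hi : (-e).toNat ∈ range (p.natDegree + 1)
    · simp [hi]
    · simp only [hi, if_false]
      rw [eq_comm, Polynomial.coeff_eq_zero_of_natDegree_lt]
      simp only [Finset.mem_range] at hi; omega
  · simp only [he, if_false]
    refine Finset.sum_eq_zero fun i _ => ?_
    rw [HahnSeries.coeff_single_of_ne]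
    omega

lemma aeval_y_mul_coeff (p : F[X]) (S : LaurentSeries F) (e : ℤ) :
    (Polynomial.aeval (HahnSeries.single (-1 : ℤ) (1 : F)) p * S).coeff e
      = ∑ i ∈ range (p.natDegree + 1), p.coeff i * S.coeff (e + i) := by
  rw [aeval_y_eq, Finset.sum_mul, hs_sum_coeff]
  refine Finset.sum_congr rfl fun i _ => ?_
  have := HahnSeries.coeff_single_mul_add (r := p.coeff i) (x := S)
    (a := e + (i : ℤ)) (b := -(i : ℤ))
  rw [show e + (i : ℤ) + -(i : ℤ) = e by ring] at this
  rw [this]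

lemma mul_coeff_small (p : F[X]) (D : LaurentSeries F) (N : ℤ)
    (h : ∀ j : ℤ, j < N + p.natDegree → D.coeff j = 0) :
    ∀ e : ℤ, e < N → (Polynomial.aeval (HahnSeries.single (-1:ℤ) (1:F)) p * D).coeff e = 0 := by
  intro e he
  rw [aeval_y_mul_coeff]
  refine Finset.sum_eq_zero fun i hi => ?_
  rw [Finset.mem_range] at hi
  rw [h (e + i) (by have : (i : ℤ) ≤ p.natDegree := by exact_mod_cast Nat.lt_succ_iff.mp hi
                    omega), mul_zero]

lemma small_of_mul (p : F[X]) (hp : p.Monic) (D : LaurentSeries F) (N : ℤ)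
    (h : ∀ e : ℤ, e < N → (Polynomial.aeval (HahnSeries.single (-1:ℤ) (1:F)) p * D).coeff e = 0) :
    ∀ j : ℤ, j < N + p.natDegree → D.coeff j = 0 := by
  by_cases hD : D = 0
  · simp [hD]
  intro j hj
  have hord : N + p.natDegree ≤ D.order := by
    by_contra hlt
    push_neg at hlt
    have h1 := h (D.order - p.natDegree) (by omega)
    rw [aeval_y_mul_coeff, Finset.sum_eq_single p.natDegree] at h1
    · rw [show D.order - (p.natDegree : ℤ) + p.natDegree = D.order by ring,
        hp.coeff_natDegree, one_mul] at h1
      exact hD (HahnSeries.coeff_order_eq_zero.mp h1)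
    · intro i hi hne
      rw [Finset.mem_range] at hi
      rw [HahnSeries.coeff_eq_zero_of_lt_order, mul_zero]
      have : (i : ℤ) < p.natDegree := by
        have := Nat.lt_succ_iff.mp hi
        omega
      omega
    · intro hmem
      exact absurd (Finset.self_mem_range_succ p.natDegree) hmem
  exact HahnSeries.coeff_eq_zero_of_lt_order (by omega)

lemma rank_le_iff_exists_ker {p q : ℕ} (M : Matrix (Fin p) (Fin (q + 1)) F) :
    M.rank ≤ q ↔ ∃ v : Fin (q + 1) → F, v ≠ 0 ∧ M.mulVec v = 0 := by
  have hfr := LinearMap.finrank_range_add_finrank_ker M.mulVecLin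
  have hdim : Module.finrank F (Fin (q + 1) → F) = q + 1 := by
    simp [Module.finrank_fintype_fun_eq_card]
  rw [hdim] at hfr
  rw [Matrix.rank]
  constructor
  · intro hr
    have hker : LinearMap.ker M.mulVecLin ≠ ⊥ := by
      intro hbot
      rw [hbot, finrank_bot] at hfr
      omega
    obtain ⟨v, hv, hv0⟩ := (Submodule.ne_bot_iff _).mp hker
    rw [LinearMap.mem_ker, Matrix.mulVecLin_apply] at hv
    exact ⟨v, hv0, hv⟩
  · rintro ⟨v, hv0, hv⟩
    have hker : LinearMap.ker M.mulVecLin ≠ ⊥ := by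
      refine (Submodule.ne_bot_iff _).mpr ⟨v, ?_, hv0⟩
      rw [LinearMap.mem_ker, Matrix.mulVecLin_apply]
      exact hv
    have hpos : 0 < Module.finrank F (LinearMap.ker M.mulVecLin) := by
      obtain ⟨w, hw, hw0⟩ := (Submodule.ne_bot_iff _).mp hker
      exact Module.finrank_pos_iff_exists_ne_zero.mpr ⟨⟨w, hw⟩, by simpa using hw0⟩
    omega

lemma coeff_sum_C_mul_X_pow (c : ℕ → F) (M : ℕ) (i : ℕ) :
    (∑ j ∈ Finset.range M, Polynomial.C (c j) * Polynomial.X ^ j).coeff i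
      = if i < M then c i else 0 := by
  rw [Polynomial.finset_sum_coeff]
  have step : ∀ j ∈ Finset.range M, (Polynomial.C (c j) * Polynomial.X ^ j).coeff i
      = if j = i then c j else 0 := by
    intro j _
    rw [Polynomial.coeff_C_mul, Polynomial.coeff_X_pow]
    by_cases h : j = i
    · subst h; simp
    · rw [if_neg (fun hh => h hh.symm), if_neg h, mul_zero]
  rw [Finset.sum_congr rfl step, Finset.sum_ite_eq' (Finset.range M)]
  simp only [Finset.mem_range]

/-- Lemma 2.3(4): with m ≤ kd/2, the (kd−m)×(m+1) matrix M, M_{ij} = b_{i+j−1}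
(1-based; below 0-based indices, so M i j = b_{i+j+1}), has rank ≤ m if and only if there
exist m' ≤ m, a polynomial h₁ of degree < m' and a monic polynomial h₂ of degree m' with
∑_{r=1}^{kd} b_r T^{−r} = h₁(T)/h₂(T) + O(T^{−kd−1+m−m'}).  Laurent series in T^{−1} are
modelled in the field `LaurentSeries F` whose variable `x = HahnSeries.single 1 1`
represents T^{−1} (so T = x⁻¹, a term T^e corresponds to exponent −e of x, and being
O(T^{−kd−1+m−m'}) means the coefficient at every x-exponent j < kd+1−m+m' vanishes). -/
theorem stmt_1 (F : Type) [Field F] (k d m : ℕ) (hk : 1 ≤ k) (hd : 1 ≤ d)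
    (hm : 2 * m ≤ k * d)
    (b : ℕ → F) (x : LaurentSeries F) (hx : x = HahnSeries.single (1 : ℤ) (1 : F)) :
    Matrix.rank (Matrix.of fun (i : Fin (k * d - m)) (j : Fin (m + 1)) =>
        b (i.1 + j.1 + 1)) ≤ m
      ↔ ∃ (m' : ℕ) (h1 h2 : Polynomial F), m' ≤ m ∧
          h1.degree < (m' : WithBot ℕ) ∧ h2.Monic ∧ h2.natDegree = m' ∧
          ∀ j : ℤ, j < (k : ℤ) * d + 1 - m + m' →
            ((∑ r ∈ Finset.Icc 1 (k * d), b r • x ^ r)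
              - Polynomial.aeval x⁻¹ h1 / Polynomial.aeval x⁻¹ h2).coeff j = 0 := by
  classical
  set n := k * d with hn
  have hmn : m ≤ n := by omega
  have hy : x⁻¹ = HahnSeries.single (-1 : ℤ) (1 : F) := by
    rw [hx, HahnSeries.inv_single, inv_one]
  set y : LaurentSeries F := HahnSeries.single (-1 : ℤ) (1 : F) with hydef
  set B : LaurentSeries F := ∑ r ∈ Finset.Icc 1 n, b r • x ^ r with hB
  have hcast : ((k : ℤ) * d : ℤ) = (n : ℤ) := by push_cast [hn]; ring
  have hBcoeff : ∀ e : ℤ, B.coeff e = if 1 ≤ e ∧ e ≤ (n:ℤ) then b e.toNat else 0 := by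
    intro e
    rw [hB, hs_sum_coeff]
    have step : ∀ r ∈ Finset.Icc 1 n, (b r • x ^ r).coeff e
        = if e = (r:ℤ) then b r else 0 := by
      intro r _
      rw [HahnSeries.coeff_smul, hx, HahnSeries.single_pow, HahnSeries.coeff_single]
      have hr1 : (r • (1:ℤ)) = (r:ℤ) := by simp
      rw [hr1]
      split_ifs <;> simp
    rw [Finset.sum_congr rfl step]
    by_cases he : 1 ≤ e ∧ e ≤ (n:ℤ)
    · rw [if_pos he]
      have key : ∀ r ∈ Finset.Icc 1 n, (if e = (r:ℤ) then b r else 0)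
          = if r = e.toNat then b r else 0 := by
        intro r _
        congr 1
        simp only [eq_iff_iff]
        omega
      rw [Finset.sum_congr rfl key, Finset.sum_ite_eq' (Finset.Icc 1 n)]
      rw [if_pos (by simp only [Finset.mem_Icc]; omega)]
    · rw [if_neg he]
      refine Finset.sum_eq_zero fun r hr => ?_
      rw [Finset.mem_Icc] at hr
      rw [if_neg (by omega)]
  have hmulB : ∀ (q : Polynomial F), q.natDegree ≤ m → ∀ s : ℕ, 1 ≤ s → s ≤ n - m →
      (Polynomial.aeval y q * B).coeff (s:ℤ)
        = ∑ i ∈ Finset.range (q.natDegree + 1), q.coeff i * b (s + i) := by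
    intro q hdle s hs1 hs2
    rw [aeval_y_mul_coeff]
    refine Finset.sum_congr rfl fun i hi => ?_
    rw [Finset.mem_range] at hi
    have hile : i ≤ m := by omega
    rw [hBcoeff, if_pos (by constructor <;> omega)]
    have htn : ((s:ℤ) + i).toNat = s + i := by omega
    rw [htn]
  have hP2ne : ∀ (q : Polynomial F), q.Monic → Polynomial.aeval y q ≠ 0 := by
    intro q hmon hzero
    have hc := aeval_y_coeff q (-(q.natDegree : ℤ))
    rw [hzero, neg_neg, if_pos (Int.natCast_nonneg _), Int.toNat_natCast,
      hmon.coeff_natDegree] at hc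
    simp at hc
  have hEDeq : ∀ (h1 h2 : Polynomial F), h2.Monic →
      Polynomial.aeval y h2 * (B - Polynomial.aeval y h1 / Polynomial.aeval y h2)
        = Polynomial.aeval y h2 * B - Polynomial.aeval y h1 := by
    intro h1 h2 hmon
    rw [mul_sub, mul_comm (Polynomial.aeval y h2) (Polynomial.aeval y h1 / Polynomial.aeval y h2),
      div_mul_cancel₀ _ (hP2ne h2 hmon)]
  rw [rank_le_iff_exists_ker]
  constructor
  · rintro ⟨v, hv0, hvK⟩
    set w : ℕ → F := fun j => if h : j < m + 1 then v ⟨j, h⟩ else 0 with hw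
    set p : Polynomial F := ∑ j ∈ Finset.range (m+1), Polynomial.C (w j) * Polynomial.X ^ j
      with hp
    have hpcoeff : ∀ i : ℕ, p.coeff i = if i < m + 1 then w i else 0 := fun i =>
      coeff_sum_C_mul_X_pow w (m+1) i
    have hp0 : p ≠ 0 := by
      intro hzero
      apply hv0
      funext j
      have hc := hpcoeff j.val
      rw [hzero, Polynomial.coeff_zero, if_pos j.isLt] at hc
      simp only [hw] at hc
      rw [dif_pos j.isLt] at hc
      simpa using hc.symm
    have hpm : p.natDegree ≤ m := by
      refine Polynomial.natDegree_le_iff_coeff_eq_zero.mpr fun N hN => ?_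
      rw [hpcoeff, if_neg (by omega)]
    set m' := p.natDegree with hm'
    set lc := p.leadingCoeff with hlc
    have hlcne : lc ≠ 0 := Polynomial.leadingCoeff_ne_zero.mpr hp0
    set h2 : Polynomial F := p * Polynomial.C lc⁻¹ with hh2
    have hmon : h2.Monic := Polynomial.monic_mul_leadingCoeff_inv hp0
    have hdeg2 : h2.natDegree = m' := by
      rw [hh2, Polynomial.natDegree_mul hp0 (by simp [hlcne]), Polynomial.natDegree_C, add_zero]
    have hh2coeff : ∀ i : ℕ, h2.coeff i = p.coeff i * lc⁻¹ := by
      intro i; rw [hh2, Polynomial.coeff_mul_C]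
    have hK : ∀ s : ℕ, 1 ≤ s → s ≤ n - m →
        ∑ i ∈ Finset.range (m' + 1), h2.coeff i * b (s + i) = 0 := by
      intro s hs1 hs2
      have hext : ∑ i ∈ Finset.range (m' + 1), h2.coeff i * b (s + i)
          = ∑ i ∈ Finset.range (m + 1), h2.coeff i * b (s + i) := by
        refine Finset.sum_subset ?_ ?_
        · intro i hi; simp only [Finset.mem_range] at *; omega
        · intro i _ hi2
          simp only [Finset.mem_range, not_lt] at hi2
          rw [Polynomial.coeff_eq_zero_of_natDegree_lt (by omega), zero_mul]
      have hker := congrFun hvK ⟨s - 1, by omega⟩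
      simp only [Matrix.mulVec, dotProduct, Matrix.of_apply, Pi.zero_apply] at hker
      have hker' : ∑ j ∈ Finset.range (m+1), b (s + j) * w j = 0 := by
        rw [← Fin.sum_univ_eq_sum_range (fun j => b (s + j) * w j) (m+1), ← hker]
        refine Finset.sum_congr rfl fun j _ => ?_
        have h1 : b (s + j.val) = b (s - 1 + j.val + 1) := by congr 1; omega
        have h2 : w j.val = v j := by rw [hw]; simp only [dif_pos j.isLt]
        rw [h1, h2]
      rw [hext]
      have : ∀ i ∈ Finset.range (m+1), h2.coeff i * b (s + i)
          = lc⁻¹ * (b (s + i) * w i) := by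
        intro i hi
        rw [Finset.mem_range] at hi
        rw [hh2coeff, hpcoeff, if_pos hi]
        ring
      rw [Finset.sum_congr rfl this, ← Finset.mul_sum, hker', mul_zero]
    set h1 : Polynomial F := ∑ i ∈ Finset.range m',
        Polynomial.C ((Polynomial.aeval y h2 * B).coeff (-(i:ℤ))) * Polynomial.X ^ i with hh1
    have hh1coeff : ∀ i : ℕ, h1.coeff i
        = if i < m' then (Polynomial.aeval y h2 * B).coeff (-(i:ℤ)) else 0 := fun i =>
      coeff_sum_C_mul_X_pow _ m' i
    have hdeg1 : h1.degree < (m' : WithBot ℕ) := by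
      rw [Polynomial.degree_lt_iff_coeff_zero]
      intro i hi
      rw [hh1coeff, if_neg (by exact_mod_cast not_lt.mpr hi)]
    have hE : ∀ e : ℤ, e < (n:ℤ) + 1 - m →
        (Polynomial.aeval y h2 * B - Polynomial.aeval y h1).coeff e = 0 := by
      intro e he
      rw [HahnSeries.coeff_sub]
      by_cases h1e : 1 ≤ e
      · have he' : ((e.toNat : ℕ) : ℤ) = e := by omega
        rw [aeval_y_coeff, if_neg (by omega), sub_zero, ← he',
          hmulB h2 (by omega) e.toNat (by omega) (by omega), hdeg2]
        exact hK e.toNat (by omega) (by omega)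
      · push_neg at h1e
        by_cases h2e : -e < (m' : ℤ)
        · rw [aeval_y_coeff, if_pos (by omega), hh1coeff, if_pos (by omega)]
          have : (-(((-e).toNat : ℕ) : ℤ)) = e := by omega
          rw [this, sub_self]
        · push_neg at h2e
          rw [aeval_y_coeff, if_pos (by omega), hh1coeff, if_neg (by omega), sub_zero]
          rw [aeval_y_mul_coeff]
          refine Finset.sum_eq_zero fun i hi => ?_
          rw [Finset.mem_range] at hi
          rw [hBcoeff, if_neg (by rw [hdeg2] at hi; omega), mul_zero]
    refine ⟨m', h1, h2, by omega, hdeg1, hmon, hdeg2, ?_⟩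
    intro j hj
    rw [hy]
    have hsm := small_of_mul h2 hmon
      (B - Polynomial.aeval y h1 / Polynomial.aeval y h2) ((n:ℤ) + 1 - m)
      (fun e he => by rw [hEDeq h1 h2 hmon]; exact hE e he) j
    exact hsm (by rw [hdeg2]; rw [hcast] at hj; omega)
  · rintro ⟨m', h1, h2, hm'm, hdeg1, hmon, hdeg2, hsmall⟩
    rw [hy] at hsmall
    have hEDsm : ∀ e : ℤ, e < (n:ℤ) + 1 - m →
        (Polynomial.aeval y h2 * B - Polynomial.aeval y h1).coeff e = 0 := by
      intro e he
      rw [← hEDeq h1 h2 hmon]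
      refine mul_coeff_small h2 _ ((n:ℤ) + 1 - m) ?_ e he
      intro j hj
      refine hsmall j ?_
      rw [hcast, hdeg2] at *
      omega
    refine ⟨fun j => h2.coeff j.val, ?_, ?_⟩
    · intro hz
      have hz' := congrFun hz ⟨m', Nat.lt_succ_of_le hm'm⟩
      simp only [Pi.zero_apply] at hz'
      have hz'' : h2.coeff m' = 0 := hz'
      rw [← hdeg2, hmon.coeff_natDegree] at hz''
      exact one_ne_zero hz''
    · funext i
      simp only [Matrix.mulVec, dotProduct, Matrix.of_apply, Pi.zero_apply]
      set s : ℕ := i.val + 1 with hs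
      have hsum : ∑ j : Fin (m+1), b (i.val + j.val + 1) * h2.coeff j.val
          = ∑ j ∈ Finset.range (m+1), h2.coeff j * b (s + j) := by
        rw [← Fin.sum_univ_eq_sum_range (fun j => h2.coeff j * b (s + j)) (m+1)]
        refine Finset.sum_congr rfl fun j _ => ?_
        rw [mul_comm]
        congr 2
        omega
      have hshr : ∑ j ∈ Finset.range (m+1), h2.coeff j * b (s + j)
          = ∑ j ∈ Finset.range (m'+1), h2.coeff j * b (s + j) := by
        refine (Finset.sum_subset ?_ ?_).symm
        · intro i hi; simp only [Finset.mem_range] at *; omega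
        · intro i _ hi2
          simp only [Finset.mem_range, not_lt] at hi2
          rw [Polynomial.coeff_eq_zero_of_natDegree_lt (by omega), zero_mul]
      have hs1 : 1 ≤ s := by omega
      have hs2 : s ≤ n - m := by have := i.isLt; omega
      have hval := hmulB h2 (by omega) s hs1 hs2
      rw [hdeg2] at hval
      have hEs := hEDsm (s : ℤ) (by have := i.isLt; omega)
      rw [HahnSeries.coeff_sub, hval, aeval_y_coeff, if_neg (by omega), sub_zero] at hEs
      rw [hsum, hshr, hEs]
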